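/- Let p be a nonzero polynomial in one complex variable of degree k with leading coefficient a_k. Then for every entire function f : ℂ → ℂ and every λ ∈ ℂ: |f(λ)| ≤ |a_k|^{-1} · sup_{|z|=1} |f(λ+z) p(λ+z)|, i.e. the constant |a_k|^{-1} is independent of λ. -/

import Mathlib

open Polynomial Metric

private lemma fac14 {z r : ℂ} (hz : ‖z‖ = 1) :
    ‖1 - (starRingEnd ℂ) r * z‖ = ‖z - r‖ := by
  have h1 : (starRingEnd ℂ) z * z = 1 := by
    rw [mul_comm, Complex.mul_conj]
    simp [Complex.normSq_eq_norm_sq, hz]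
  have : (1 : ℂ) - (starRingEnd ℂ) r * z = (starRingEnd ℂ) (z - r) * z := by
    rw [map_sub, sub_mul, h1]
  rw [this, norm_mul, hz, mul_one, RCLike.norm_conj]

private lemma prodnorm14 (z : ℂ) (hz : ‖z‖ = 1) (M : Multiset ℂ) :
    ‖(M.map fun r => 1 - (starRingEnd ℂ) r * z).prod‖
      = ‖(M.map fun r => z - r).prod‖ := by
  induction M using Multiset.induction_on with
  | empty => simp
  | cons r M ih => simp [norm_mul, ih, fac14 hz]

private lemma diff14 (M : Multiset ℂ) :
    Differentiable ℂ (fun z => (M.map fun r => 1 - (starRingEnd ℂ) r * z).prod) := by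
  induction M using Multiset.induction_on with
  | empty => simp only [Multiset.map_zero, Multiset.prod_zero]; exact differentiable_const 1
  | cons r M ih =>
    simp only [Multiset.map_cons, Multiset.prod_cons]
    exact ((differentiable_const (1:ℂ)).sub ((differentiable_const _).mul differentiable_id)).mul ih

private lemma aux14 (p : Polynomial ℂ) (f : ℂ → ℂ) (hf : Differentiable ℂ f) :
    ‖f 0‖ * ‖p.leadingCoeff‖ ≤
      sSup {x : ℝ | ∃ z : ℂ, ‖z‖ = 1 ∧ x = ‖f z * p.eval z‖} := by
  set a := p.leadingCoeff with ha
  set M := p.roots with hM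
  have hcard : Multiset.card p.roots = p.natDegree :=
    (Polynomial.splits_iff_card_roots.mp (IsAlgClosed.splits p))
  have hpfac := Polynomial.C_leadingCoeff_mul_prod_multiset_X_sub_C hcard
  have heval : ∀ z : ℂ, p.eval z = a * (M.map fun r => z - r).prod := by
    intro z
    conv_lhs => rw [← hpfac]
    simp [Polynomial.eval_multiset_prod, Multiset.map_map, Function.comp, ha, hM]
  set S := {x : ℝ | ∃ z : ℂ, ‖z‖ = 1 ∧ x = ‖f z * p.eval z‖} with hS
  have hSeq : S = (fun z => ‖f z * p.eval z‖) '' (sphere (0:ℂ) 1) := by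
    ext x
    simp only [hS, Set.mem_setOf_eq, Set.mem_image, mem_sphere_iff_norm, sub_zero, eq_comm]
  have hbdd : BddAbove S := by
    rw [hSeq]
    exact ((isCompact_sphere (0:ℂ) 1).image
      ((hf.continuous.mul (Polynomial.continuous p)).norm)).bddAbove
  set g : ℂ → ℂ := fun z => f z * (a * (M.map fun r => 1 - (starRingEnd ℂ) r * z).prod) with hg
  have hgd : Differentiable ℂ g := hf.mul ((differentiable_const a).mul (diff14 M))
  have hmax : ‖g 0‖ ≤ sSup S := by
    apply Complex.norm_le_of_forall_mem_frontier_norm_le (isBounded_ball (x := (0:ℂ)) (r := 1))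
      hgd.diffContOnCl
    · intro z hz
      rw [frontier_ball (0:ℂ) one_ne_zero, mem_sphere_iff_norm, sub_zero] at hz
      have : ‖g z‖ = ‖f z * p.eval z‖ := by
        rw [hg]
        simp only [norm_mul, heval z, prodnorm14 z hz M]
      rw [this]
      exact le_csSup hbdd ⟨z, hz, rfl⟩
    · exact subset_closure (mem_ball_self one_pos)
  have hg0 : ‖g 0‖ = ‖f 0‖ * ‖a‖ := by
    have : (M.map fun r => 1 - (starRingEnd ℂ) r * (0:ℂ)).prod = 1 := by
      simp
    rw [hg]; simp [this, norm_mul]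
  rw [hg0] at hmax
  exact hmax

theorem stmt14 (p : Polynomial ℂ) (hp : p ≠ 0) (f : ℂ → ℂ) (hf : Differentiable ℂ f)
    (lam : ℂ) :
    ‖f lam‖ ≤ ‖p.leadingCoeff‖⁻¹ *
      sSup {x : ℝ | ∃ z : ℂ, ‖z‖ = 1 ∧ x = ‖f (lam + z) * p.eval (lam + z)‖} := by
  set q : Polynomial ℂ := p.comp (X + C lam) with hq
  have hlc : q.leadingCoeff = p.leadingCoeff := by
    rw [hq, Polynomial.leadingCoeff_comp (by simp [Polynomial.natDegree_X_add_C])]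
    simp [Polynomial.leadingCoeff_X_add_C]
  have hq0 : q ≠ 0 := by
    rw [← Polynomial.leadingCoeff_ne_zero, hlc, Polynomial.leadingCoeff_ne_zero]
    exact hp
  have hfd : Differentiable ℂ (fun z => f (lam + z)) :=
    hf.comp ((differentiable_const lam).add differentiable_id)
  have h := aux14 q (fun z => f (lam + z)) hfd
  have hev : ∀ z : ℂ, q.eval z = p.eval (lam + z) := by
    intro z; rw [hq]; simp [Polynomial.eval_comp, add_comm]
  simp only [hev, hlc, add_zero] at h
  have ha : (0:ℝ) < ‖p.leadingCoeff‖ := by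
    simp [Polynomial.leadingCoeff_ne_zero, hp]
  rw [mul_comm, ← le_inv_mul_iff₀ ha] at h
  exact h
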